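/- For every n ≥ 1, the dimension of ASM_n equals (n−1)^2; that is, the affine span of the n×n alternating sign matrices in ℝ^{n×n} has dimension (n−1)^2. -/

import Mathlib

open scoped BigOperators

/-- The nonzero entries of the vector `v` alternate in sign: any two nonzero
entries with only zeros strictly between them have opposite values. -/
def AlternatesSign {n : ℕ} (v : Fin n → ℝ) : Prop :=
  ∀ j₁ j₂ : Fin n, j₁ < j₂ → v j₁ ≠ 0 → v j₂ ≠ 0 →
    (∀ k : Fin n, j₁ < k → k < j₂ → v k = 0) → v j₂ = -v j₁

/-- `A` is an `n × n` alternating sign matrix: entries in `{0, 1, -1}`, each row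
and column sums to `1`, and the nonzero entries of each row and column
alternate in sign. -/
def IsASM (n : ℕ) (A : Matrix (Fin n) (Fin n) ℝ) : Prop :=
  (∀ i j, A i j = 0 ∨ A i j = 1 ∨ A i j = -1) ∧
  (∀ i, ∑ j, A i j = 1) ∧
  (∀ j, ∑ i, A i j = 1) ∧
  (∀ i, AlternatesSign (fun j => A i j)) ∧
  (∀ j, AlternatesSign (fun i => A i j))

/-- The alternating sign matrix polytope: the convex hull of the ASMs. -/
def ASMPolytope (n : ℕ) : Set (Matrix (Fin n) (Fin n) ℝ) :=
  convexHull ℝ {A : Matrix (Fin n) (Fin n) ℝ | IsASM n A}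

namespace ASMaux

open Matrix Finset

/-- permutation matrix -/
def permMat {n : ℕ} (σ : Equiv.Perm (Fin n)) : Matrix (Fin n) (Fin n) ℝ :=
  Matrix.of fun i j => if σ i = j then 1 else 0

lemma isASM_permMat {n : ℕ} (σ : Equiv.Perm (Fin n)) : IsASM n (permMat σ) := by
  refine ⟨?_, ?_, ?_, ?_, ?_⟩
  · intro i j; by_cases h : σ i = j <;> simp [permMat, h]
  · intro i; simp [permMat, Finset.sum_ite_eq]
  · intro j
    have := Equiv.sum_comp σ (fun x => if x = j then (1:ℝ) else 0)
    simp only [Finset.sum_ite_eq', Finset.mem_univ, if_true] at this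
    simpa [permMat] using this
  · intro i j₁ j₂ hlt h1 h2 _
    exfalso
    have e1 : σ i = j₁ := by by_contra h; exact h1 (by simp [permMat, h])
    have e2 : σ i = j₂ := by by_contra h; exact h2 (by simp [permMat, h])
    exact absurd (e1 ▸ e2) (ne_of_lt hlt)
  · intro j i₁ i₂ hlt h1 h2 _
    exfalso
    have e1 : σ i₁ = j := by by_contra h; exact h1 (by simp [permMat, h])
    have e2 : σ i₂ = j := by by_contra h; exact h2 (by simp [permMat, h])
    exact absurd (σ.injective (e1.trans e2.symm)) (ne_of_lt hlt)

/-- the subspace of matrices with zero row and column sums -/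
def W (n : ℕ) : Submodule ℝ (Matrix (Fin n) (Fin n) ℝ) where
  carrier := {M | (∀ i, ∑ j, M i j = 0) ∧ (∀ j, ∑ i, M i j = 0)}
  add_mem' := by
    rintro A B ⟨hA1, hA2⟩ ⟨hB1, hB2⟩
    constructor
    · intro i; simp [Matrix.add_apply, Finset.sum_add_distrib, hA1 i, hB1 i]
    · intro j; simp [Matrix.add_apply, Finset.sum_add_distrib, hA2 j, hB2 j]
  zero_mem' := ⟨by simp, by simp⟩
  smul_mem' := by
    rintro c A ⟨hA1, hA2⟩
    constructor
    · intro i; simp [Matrix.smul_apply, ← Finset.mul_sum, hA1 i]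
    · intro j; simp [Matrix.smul_apply, ← Finset.mul_sum, hA2 j]

/-- restriction to the top-left block -/
def restr (m : ℕ) : Matrix (Fin (m+1)) (Fin (m+1)) ℝ →ₗ[ℝ] Matrix (Fin m) (Fin m) ℝ where
  toFun M := Matrix.of fun i j => M i.castSucc j.castSucc
  map_add' A B := rfl
  map_smul' c A := rfl

lemma restr_inj_on_W {m : ℕ} {M : Matrix (Fin (m+1)) (Fin (m+1)) ℝ}
    (hM : M ∈ W (m+1)) (h0 : restr m M = 0) : M = 0 := by
  have hint : ∀ i j : Fin m, M i.castSucc j.castSucc = 0 := by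
    intro i j
    have := congrFun (congrFun h0 i) j
    exact this
  have hlastcol : ∀ i : Fin m, M i.castSucc (Fin.last m) = 0 := by
    intro i
    have := hM.1 i.castSucc
    rw [Fin.sum_univ_castSucc] at this
    simp only [hint] at this
    simpa using this
  have hlastrow : ∀ j : Fin (m+1), M (Fin.last m) j = 0 := by
    have key : ∀ j : Fin (m+1), (∑ i : Fin m, M i.castSucc j) + M (Fin.last m) j = 0 := by
      intro j; have := hM.2 j; rwa [Fin.sum_univ_castSucc] at this
    intro j
    refine Fin.lastCases ?_ ?_ j
    · have := key (Fin.last m); simp only [hlastcol] at this; simpa using this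
    · intro j'; have := key j'.castSucc; simp only [hint] at this; simpa using this
  funext i j
  refine Fin.lastCases ?_ ?_ i
  · exact hlastrow j
  · intro i'
    refine Fin.lastCases ?_ ?_ j
    · exact hlastcol i'
    · intro j'; exact hint i' j'


/-- partial-sums linear map -/
def Tmap (m : ℕ) : Matrix (Fin (m+1)) (Fin (m+1)) ℝ →ₗ[ℝ] Matrix (Fin m) (Fin m) ℝ where
  toFun M := Matrix.of fun i j => ∑ i', ∑ j',
    ((if i' ≤ i.castSucc then (1:ℝ) else 0) * (if j' ≤ j.castSucc then (1:ℝ) else 0)) * M i' j'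
  map_add' A B := by
    funext i j
    simp [Matrix.add_apply, mul_add, Finset.sum_add_distrib]
  map_smul' c A := by
    funext i j
    simp [Matrix.smul_apply, Finset.mul_sum, mul_left_comm, smul_eq_mul]

def sig {m : ℕ} (k l : Fin m) : Equiv.Perm (Fin (m+1)) :=
  Equiv.addRight (l.castSucc - k.castSucc)

def tau {m : ℕ} (k l : Fin m) : Equiv.Perm (Fin (m+1)) :=
  (Equiv.swap k.castSucc k.succ).trans (sig k l)

lemma sig_castSucc {m : ℕ} (k l : Fin m) : sig k l k.castSucc = l.castSucc := by
  show k.castSucc + (l.castSucc - k.castSucc) = l.castSucc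
  abel

lemma sig_succ {m : ℕ} (k l : Fin m) : sig k l k.succ = l.succ := by
  have h1 : (k.castSucc : Fin (m+1)) + 1 = k.succ := Fin.coeSucc_eq_succ
  have h2 : (l.castSucc : Fin (m+1)) + 1 = l.succ := Fin.coeSucc_eq_succ
  show k.succ + (l.castSucc - k.castSucc) = l.succ
  rw [← h1, ← h2]
  abel

lemma D_eq {m : ℕ} (k l : Fin m) :
    permMat (sig k l) - permMat (tau k l) =
      Matrix.of (fun i j =>
        ((if k.castSucc = i then (1:ℝ) else 0) - (if k.succ = i then 1 else 0)) *
        ((if l.castSucc = j then (1:ℝ) else 0) - (if l.succ = j then 1 else 0))) := by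
  have hne : k.castSucc ≠ k.succ := (Fin.castSucc_lt_succ : k.castSucc < k.succ).ne
  funext i j
  simp only [Matrix.sub_apply, Matrix.of_apply, permMat, tau, Equiv.trans_apply]
  by_cases h1 : i = k.castSucc
  · subst h1
    simp only [Equiv.swap_apply_left, sig_castSucc, sig_succ]
    simp only [if_true]
    rw [if_neg (Ne.symm hne)]
    ring
  · by_cases h2 : i = k.succ
    · subst h2
      simp only [Equiv.swap_apply_right, sig_castSucc, sig_succ]
      simp only [if_true]
      rw [if_neg hne]
      ring
    · simp only [Equiv.swap_apply_of_ne_of_ne h1 h2]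
      have e1 : k.castSucc ≠ i := fun h => h1 h.symm
      have e2 : k.succ ≠ i := fun h => h2 h.symm
      rw [if_neg e1, if_neg e2, sub_self]
      ring

lemma sum_weight {m : ℕ} (k : Fin m) (i : Fin m) :
    (∑ i' : Fin (m+1), (if i' ≤ i.castSucc then (1:ℝ) else 0) *
      ((if k.castSucc = i' then (1:ℝ) else 0) - (if k.succ = i' then 1 else 0))) =
    (if k = i then 1 else 0) := by
  have expand : ∀ i' : Fin (m+1),
      (if i' ≤ i.castSucc then (1:ℝ) else 0) *
        ((if k.castSucc = i' then (1:ℝ) else 0) - (if k.succ = i' then 1 else 0)) =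
      (if k.castSucc = i' then (if i' ≤ i.castSucc then (1:ℝ) else 0) else 0) -
      (if k.succ = i' then (if i' ≤ i.castSucc then (1:ℝ) else 0) else 0) := by
    intro i'
    by_cases h1 : k.castSucc = i' <;> by_cases h2 : k.succ = i' <;> simp [h1, h2]
  rw [Finset.sum_congr rfl (fun i' _ => expand i'), Finset.sum_sub_distrib,
    Finset.sum_ite_eq, Finset.sum_ite_eq]
  simp only [Finset.mem_univ, if_true]
  have hc : (k.castSucc ≤ i.castSucc) ↔ k ≤ i := Fin.castSucc_le_castSucc_iff
  have hs : (k.succ ≤ i.castSucc) ↔ k < i := by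
    rw [Fin.le_def, Fin.lt_def]
    simp only [Fin.val_succ, Fin.coe_castSucc]
    omega
  rcases lt_trichotomy k i with h | h | h
  · rw [if_pos (hc.mpr h.le), if_pos (hs.mpr h), if_neg h.ne]; ring
  · subst h
    rw [if_pos (hc.mpr le_rfl), if_neg (fun hh => absurd (hs.mp hh) (lt_irrefl k)), if_pos rfl]
    ring
  · rw [if_neg (fun hh => absurd (hc.mp hh) (not_le_of_gt h)),
      if_neg (fun hh => absurd (hs.mp hh) (asymm h)), if_neg h.ne']
    ring

lemma Tmap_D {m : ℕ} (k l : Fin m) :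
    Tmap m (permMat (sig k l) - permMat (tau k l)) =
      Matrix.of (fun i j => if k = i ∧ l = j then (1:ℝ) else 0) := by
  rw [D_eq]
  funext i j
  show (∑ i' : Fin (m+1), ∑ j' : Fin (m+1),
    ((if i' ≤ i.castSucc then (1:ℝ) else 0) * (if j' ≤ j.castSucc then (1:ℝ) else 0)) *
      (((if k.castSucc = i' then (1:ℝ) else 0) - (if k.succ = i' then 1 else 0)) *
       ((if l.castSucc = j' then (1:ℝ) else 0) - (if l.succ = j' then 1 else 0)))) = _
  have rearr : ∀ i' j' : Fin (m+1),
      ((if i' ≤ i.castSucc then (1:ℝ) else 0) * (if j' ≤ j.castSucc then (1:ℝ) else 0)) *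
      (((if k.castSucc = i' then (1:ℝ) else 0) - (if k.succ = i' then 1 else 0)) *
       ((if l.castSucc = j' then (1:ℝ) else 0) - (if l.succ = j' then 1 else 0))) =
      ((if i' ≤ i.castSucc then (1:ℝ) else 0) *
        ((if k.castSucc = i' then (1:ℝ) else 0) - (if k.succ = i' then 1 else 0))) *
      ((if j' ≤ j.castSucc then (1:ℝ) else 0) *
        ((if l.castSucc = j' then (1:ℝ) else 0) - (if l.succ = j' then 1 else 0))) := by
    intro i' j'; ring
  rw [Finset.sum_congr rfl (fun i' _ => Finset.sum_congr rfl (fun j' _ => rearr i' j'))]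
  rw [← Finset.sum_mul_sum, sum_weight, sum_weight]
  by_cases h1 : k = i <;> by_cases h2 : l = j <;> simp [h1, h2]

end ASMaux


open ASMaux

/-- The dimension of the alternating sign matrix polytope, i.e. of the affine
span of the `n × n` alternating sign matrices, is `(n-1)²`. -/
theorem dim_asmPolytope (n : ℕ) (hn : 1 ≤ n) :
    Module.finrank ℝ
      (affineSpan ℝ {A : Matrix (Fin n) (Fin n) ℝ | IsASM n A}).direction =
      (n - 1) ^ 2 := by
  obtain ⟨m, rfl⟩ : ∃ m, n = m + 1 := ⟨n - 1, (Nat.succ_pred_eq_of_pos hn).symm⟩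
  set S : Set (Matrix (Fin (m+1)) (Fin (m+1)) ℝ) := {A | IsASM (m+1) A} with hSdef
  rw [direction_affineSpan]
  have hfinMat : Module.finrank ℝ (Matrix (Fin m) (Fin m) ℝ) = m ^ 2 := by
    rw [Module.finrank_matrix]
    simp [sq]
  -- upper bound
  have hle : vectorSpan ℝ S ≤ W (m+1) := by
    rw [vectorSpan_def, Submodule.span_le]
    intro x hx
    rw [Set.mem_vsub] at hx
    obtain ⟨A, hA, B, hB, rfl⟩ := hx
    have hAB : (A -ᵥ B : Matrix (Fin (m+1)) (Fin (m+1)) ℝ) = A - B := rfl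
    rw [hAB]
    constructor
    · intro i
      simp [Matrix.sub_apply, Finset.sum_sub_distrib, hA.2.1 i, hB.2.1 i]
    · intro j
      simp [Matrix.sub_apply, Finset.sum_sub_distrib, hA.2.2.1 j, hB.2.2.1 j]
  have finW : Module.finrank ℝ (W (m+1)) ≤ m ^ 2 := by
    have hinj : Function.Injective ((restr m).comp (W (m+1)).subtype) := by
      intro x y hxy
      have hsub : (x : Matrix (Fin (m+1)) (Fin (m+1)) ℝ) - y ∈ W (m+1) := sub_mem x.2 y.2
      have h0 : restr m ((x : Matrix (Fin (m+1)) (Fin (m+1)) ℝ) - y) = 0 := by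
        rw [map_sub, sub_eq_zero]
        exact hxy
      exact Subtype.ext (sub_eq_zero.mp (restr_inj_on_W hsub h0))
    calc Module.finrank ℝ (W (m+1))
        ≤ Module.finrank ℝ (Matrix (Fin m) (Fin m) ℝ) :=
          LinearMap.finrank_le_finrank_of_injective hinj
      _ = m ^ 2 := hfinMat
  have upper : Module.finrank ℝ (vectorSpan ℝ S) ≤ m ^ 2 :=
    le_trans (Submodule.finrank_mono hle) finW
  -- lower bound
  have hDmem : ∀ k l : Fin m,
      permMat (sig k l) - permMat (tau k l) ∈ vectorSpan ℝ S := by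
    intro k l
    have h1 : permMat (sig k l) ∈ S := isASM_permMat _
    have h2 : permMat (tau k l) ∈ S := isASM_permMat _
    exact vsub_mem_vectorSpan ℝ h1 h2
  have hmap : Submodule.map (Tmap m) (vectorSpan ℝ S) = ⊤ := by
    rw [Submodule.eq_top_iff']
    intro N
    refine ⟨∑ k : Fin m, ∑ l : Fin m, N k l • (permMat (sig k l) - permMat (tau k l)), ?_, ?_⟩
    · exact Submodule.sum_mem _ fun k _ => Submodule.sum_mem _ fun l _ =>
        Submodule.smul_mem _ _ (hDmem k l)
    · rw [map_sum]
      simp_rw [map_sum, map_smul, Tmap_D]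
      funext i j
      rw [Matrix.sum_apply]
      simp_rw [Matrix.sum_apply, Matrix.smul_apply, Matrix.of_apply, smul_eq_mul]
      have key : ∀ k l : Fin m, N k l * (if k = i ∧ l = j then (1:ℝ) else 0) =
          if k = i then (if l = j then N k l else 0) else 0 := by
        intro k l
        by_cases h1 : k = i <;> by_cases h2 : l = j <;> simp [h1, h2]
      rw [Finset.sum_congr rfl fun k _ => Finset.sum_congr rfl fun l _ => key k l]
      simp [Finset.sum_ite_eq']
  have lower : m ^ 2 ≤ Module.finrank ℝ (vectorSpan ℝ S) := by
    have h1 : Module.finrank ℝ (Submodule.map (Tmap m) (vectorSpan ℝ S)) ≤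
        Module.finrank ℝ (vectorSpan ℝ S) := Submodule.finrank_map_le _ _
    rw [hmap] at h1
    rw [finrank_top, hfinMat] at h1
    exact h1
  have : Module.finrank ℝ (vectorSpan ℝ S) = m ^ 2 := le_antisymm upper lower
  simpa using this
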